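/- Let θ₁,…,θ_J be the support points of a probability measure g₀ on a bounded set Θ ⊆ ℝ, let θ₀ ∈ Θ, M := sup_{θ∈Θ}|θ-θ₀|, and let g be any probability measure on Θ. Then |∫ (θ-θ₀)^{k-2J} ∏_{j=1}^J (θ-θ_j)² d(g-g₀)(θ)| ≤ (M+1)^{2J} M^{k-2J} max_{1≤j≤2J}|m_{j,g}-m_{j,g₀}| for every integer k > 2J, where m_{j,ν} := ∫(θ-θ₀)^j dν(θ). -/

import Mathlib

open MeasureTheory Finset


lemma coeff_expansion (r : ℕ → ℝ) (n : ℕ) : ∃ c : ℕ → ℝ,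
    (∀ x : ℝ, ∏ j ∈ Finset.range n, (x - r j) = ∑ i ∈ Finset.range (n+1), c i * x ^ i) ∧
    (∑ i ∈ Finset.range (n+1), |c i| ≤ ∏ j ∈ Finset.range n, (|r j| + 1)) ∧
    (∀ i, n < i → c i = 0) := by
  induction n with
  | zero =>
    refine ⟨fun i => if i = 0 then 1 else 0, ?_, ?_, ?_⟩
    · intro x; simp
    · simp
    · intro i hi; simp [show i ≠ 0 by omega]
  | succ n ih =>
    obtain ⟨c, hc, hb, hz⟩ := ih
    refine ⟨fun i => (if i = 0 then 0 else c (i-1)) - r n * c i, ?_, ?_, ?_⟩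
    · intro x
      have h1 : ∑ i ∈ Finset.range (n+2), ((if i = 0 then (0:ℝ) else c (i-1)) - r n * c i) * x ^ i
          = (∑ i ∈ Finset.range (n+2), (if i = 0 then (0:ℝ) else c (i-1)) * x ^ i)
            - r n * ∑ i ∈ Finset.range (n+2), c i * x ^ i := by
        rw [Finset.mul_sum, ← Finset.sum_sub_distrib]
        congr 1; ext i; ring
      have h2 : ∑ i ∈ Finset.range (n+2), (if i = 0 then (0:ℝ) else c (i-1)) * x ^ i
          = (∑ i ∈ Finset.range (n+1), c i * x ^ i) * x := by
        rw [Finset.sum_range_succ' (fun i => (if i = 0 then (0:ℝ) else c (i-1)) * x ^ i) (n+1)]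
        simp [Finset.sum_mul, pow_succ]
        ring_nf
        congr 1; ext i; ring
      have h3 : ∑ i ∈ Finset.range (n+2), c i * x ^ i = ∑ i ∈ Finset.range (n+1), c i * x ^ i := by
        rw [Finset.sum_range_succ, hz (n+1) (by omega), zero_mul, add_zero]
      rw [Finset.prod_range_succ, hc x, h1, h2, h3]; ring
    · have h2 : ∑ i ∈ Finset.range (n+2), |if i = 0 then (0:ℝ) else c (i-1)|
          = ∑ i ∈ Finset.range (n+1), |c i| := by
        rw [Finset.sum_range_succ' (fun i => |if i = 0 then (0:ℝ) else c (i-1)|) (n+1)]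
        simp
      have h3 : ∑ i ∈ Finset.range (n+2), |c i| = ∑ i ∈ Finset.range (n+1), |c i| := by
        rw [Finset.sum_range_succ, hz (n+1) (by omega), abs_zero, add_zero]
      calc ∑ i ∈ Finset.range (n+2), |(if i = 0 then (0:ℝ) else c (i-1)) - r n * c i|
          ≤ ∑ i ∈ Finset.range (n+2), (|if i = 0 then (0:ℝ) else c (i-1)| + |r n| * |c i|) := by
            apply Finset.sum_le_sum; intro i _
            calc |(if i = 0 then (0:ℝ) else c (i-1)) - r n * c i|
                ≤ |if i = 0 then (0:ℝ) else c (i-1)| + |r n * c i| := abs_sub _ _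
              _ = _ := by rw [abs_mul]
        _ = (∑ i ∈ Finset.range (n+1), |c i|) + |r n| * ∑ i ∈ Finset.range (n+1), |c i| := by
            rw [Finset.sum_add_distrib, h2, ← Finset.mul_sum, h3]
        _ = (1 + |r n|) * ∑ i ∈ Finset.range (n+1), |c i| := by ring
        _ ≤ (1 + |r n|) * ∏ j ∈ Finset.range n, (|r j| + 1) := by
            apply mul_le_mul_of_nonneg_left hb (by positivity)
        _ = ∏ j ∈ Finset.range (n+1), (|r j| + 1) := by rw [Finset.prod_range_succ]; ring
    · intro i hi
      simp only [show i ≠ 0 by omega, if_neg, ite_false, hz (i-1) (by omega), hz i (by omega)]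
      ring

lemma integrable_aux (ν : Measure ℝ) [IsProbabilityMeasure ν] (Θ : Set ℝ) (hν : ν Θᶜ = 0)
    (f : ℝ → ℝ) (hf : Continuous f) (C : ℝ) (hC : ∀ θ ∈ Θ, |f θ| ≤ C) : Integrable f ν := by
  refine (integrable_const C).mono' hf.aestronglyMeasurable ?_
  have hae : ∀ᵐ θ ∂ν, θ ∈ Θ := by rw [ae_iff]; exact hν
  filter_upwards [hae] with θ hθ
  simpa [Real.norm_eq_abs] using hC θ hθ

theorem annihilating_polynomial_moment_bound
    (Θ : Set ℝ) (θ₀ M : ℝ) (hθ₀ : θ₀ ∈ Θ)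
    (hM : IsLUB ((fun θ => |θ - θ₀|) '' Θ) M)
    (J : ℕ) (hJ : 1 ≤ J) (θs : Fin J → ℝ)
    (g g₀ : Measure ℝ) [IsProbabilityMeasure g] [IsProbabilityMeasure g₀]
    (hgΘ : g Θᶜ = 0) (hg₀Θ : g₀ Θᶜ = 0)
    (hθs : ∀ j, θs j ∈ Θ)
    (hsupp : g₀ (Set.range θs)ᶜ = 0)
    (m : ℕ → Measure ℝ → ℝ)
    (hm : ∀ k ν, m k ν = ∫ θ, (θ - θ₀) ^ k ∂ν)
    (k : ℕ) (hk : 2 * J < k)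
    (hne : (Finset.Icc 1 (2 * J)).Nonempty) :
    |(∫ θ, (θ - θ₀) ^ (k - 2 * J) * ∏ j, (θ - θs j) ^ 2 ∂g) -
        ∫ θ, (θ - θ₀) ^ (k - 2 * J) * ∏ j, (θ - θs j) ^ 2 ∂g₀| ≤
      (M + 1) ^ (2 * J) * M ^ (k - 2 * J) *
        (Finset.Icc 1 (2 * J)).sup' hne (fun j => |m j g - m j g₀|) := by
  have hJpos : 0 < J := hJ
  set n := k - 2 * J with hn
  set P : ℝ → ℝ := fun θ => ∏ j, (θ - θs j) ^ 2 with hP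
  set f : ℝ → ℝ := fun θ => (θ - θ₀) ^ n * P θ with hf
  set S : ℝ := (Finset.Icc 1 (2 * J)).sup' hne (fun j => |m j g - m j g₀|) with hSdef
  -- basic facts about M
  have hMabs : ∀ θ ∈ Θ, |θ - θ₀| ≤ M := fun θ hθ => hM.1 (Set.mem_image_of_mem _ hθ)
  have hM0 : 0 ≤ M := by simpa using hMabs θ₀ hθ₀
  -- roots
  have hr : ∀ i : ℕ, i % J < J := fun i => Nat.mod_lt i hJpos
  set r : ℕ → ℝ := fun i => θs ⟨i % J, hr i⟩ - θ₀ with hrdef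
  have hrM : ∀ i, |r i| ≤ M := fun i => hMabs _ (hθs _)
  -- product identity
  have hhalf : ∀ θ : ℝ, ∏ i ∈ Finset.range J, ((θ - θ₀) - r i) = ∏ j, (θ - θs j) := by
    intro θ
    rw [← Fin.prod_univ_eq_prod_range (fun i => (θ - θ₀) - r i) J]
    refine Finset.prod_congr rfl fun j _ => ?_
    have hmod : (j : ℕ) % J = (j : ℕ) := Nat.mod_eq_of_lt j.isLt
    have hjj : (⟨(j : ℕ) % J, hr (j : ℕ)⟩ : Fin J) = j := Fin.ext hmod
    show θ - θ₀ - (θs ⟨(j : ℕ) % J, hr (j : ℕ)⟩ - θ₀) = θ - θs j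
    rw [hjj]; ring
  have hprod : ∀ θ : ℝ, P θ = ∏ i ∈ Finset.range (2 * J), ((θ - θ₀) - r i) := by
    intro θ
    have h2 : ∀ i, r (J + i) = r i := by
      intro i
      show θs ⟨(J + i) % J, hr (J + i)⟩ - θ₀ = θs ⟨i % J, hr i⟩ - θ₀
      congr 2
      simp [Nat.add_mod_left]
    rw [two_mul, Finset.prod_range_add]
    simp only [h2]
    rw [hhalf θ, ← Finset.prod_mul_distrib]
    exact (Finset.prod_congr rfl fun j _ => (sq (θ - θs j)).symm).symm
  -- coefficients
  obtain ⟨c, hc_eval, hc_bound, hc_zero⟩ := coeff_expansion r (2 * J)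
  have hcM : ∑ i ∈ Finset.range (2 * J + 1), |c i| ≤ (M + 1) ^ (2 * J) := by
    refine hc_bound.trans ?_
    calc ∏ j ∈ Finset.range (2 * J), (|r j| + 1)
        ≤ ∏ _j ∈ Finset.range (2 * J), (M + 1) :=
          Finset.prod_le_prod (fun j _ => by positivity)
            (fun j _ => add_le_add (hrM j) le_rfl)
      _ = (M + 1) ^ (2 * J) := by rw [Finset.prod_const, Finset.card_range]
  have hPexp : ∀ θ : ℝ, P θ = ∑ i ∈ Finset.range (2 * J + 1), c i * (θ - θ₀) ^ i := by
    intro θ; rw [hprod θ, hc_eval (θ - θ₀)]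
  -- nonnegativity of P
  have hPnn : ∀ θ, 0 ≤ P θ := fun θ => Finset.prod_nonneg fun j _ => sq_nonneg _
  -- integrability
  have hPcont : Continuous P := continuous_finset_prod _ fun j _ => by fun_prop
  have hPbd : ∀ θ ∈ Θ, |P θ| ≤ (2 * M) ^ (2 * J) := by
    intro θ hθ
    rw [abs_of_nonneg (hPnn θ)]
    calc P θ ≤ ∏ _j : Fin J, (2 * M) ^ 2 := by
          refine Finset.prod_le_prod (fun j _ => sq_nonneg _) (fun j _ => ?_)
          rw [← sq_abs]
          refine pow_le_pow_left₀ (abs_nonneg _) ?_ 2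
          calc |θ - θs j| = |(θ - θ₀) - (θs j - θ₀)| := by ring_nf
            _ ≤ |θ - θ₀| + |θs j - θ₀| := abs_sub _ _
            _ ≤ M + M := add_le_add (hMabs θ hθ) (hMabs _ (hθs j))
            _ = 2 * M := by ring
      _ = (2 * M) ^ (2 * J) := by
          rw [Finset.prod_const, Finset.card_univ, Fintype.card_fin, ← pow_mul, mul_comm 2 J]
  have hPint : Integrable P g := integrable_aux g Θ hgΘ P hPcont _ hPbd
  have hpow_int : ∀ (i : ℕ) (ν : Measure ℝ), IsProbabilityMeasure ν → ν Θᶜ = 0 →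
      Integrable (fun θ => (θ - θ₀) ^ i) ν := by
    intro i ν hνp hν
    refine integrable_aux ν Θ hν _ (by fun_prop) (M ^ i) fun θ hθ => ?_
    rw [abs_pow]
    exact pow_le_pow_left₀ (abs_nonneg _) (hMabs θ hθ) i
  have hfint : Integrable f g := by
    refine integrable_aux g Θ hgΘ f ((by fun_prop : Continuous fun θ => (θ - θ₀) ^ n).mul hPcont)
      (M ^ n * (2 * M) ^ (2 * J)) fun θ hθ => ?_
    rw [hf, abs_mul, abs_pow]
    exact mul_le_mul (pow_le_pow_left₀ (abs_nonneg _) (hMabs θ hθ) n) (hPbd θ hθ)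
      (abs_nonneg _) (by positivity)
  -- integrals against g₀ vanish
  have haesupp : ∀ᵐ θ ∂g₀, θ ∈ Set.range θs := by rw [ae_iff]; exact hsupp
  have hPzero : ∀ θ ∈ Set.range θs, P θ = 0 := by
    rintro θ ⟨j₀, rfl⟩
    exact Finset.prod_eq_zero (Finset.mem_univ j₀) (by simp)
  have hIf0 : ∫ θ, f θ ∂g₀ = 0 := by
    refine integral_eq_zero_of_ae ?_
    filter_upwards [haesupp] with θ hθ
    rw [hf]; simp [hPzero θ hθ]
  have hIP0 : ∫ θ, P θ ∂g₀ = 0 := by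
    refine integral_eq_zero_of_ae ?_
    filter_upwards [haesupp] with θ hθ
    simp [hPzero θ hθ]
  -- moment expansion
  have hexp : ∀ (ν : Measure ℝ), IsProbabilityMeasure ν → ν Θᶜ = 0 →
      ∫ θ, P θ ∂ν = ∑ i ∈ Finset.range (2 * J + 1), c i * m i ν := by
    intro ν hνp hν
    calc ∫ θ, P θ ∂ν = ∫ θ, ∑ i ∈ Finset.range (2 * J + 1), c i * (θ - θ₀) ^ i ∂ν := by
          exact integral_congr_ae (Filter.EventuallyEq.of_eq (funext hPexp))
      _ = ∑ i ∈ Finset.range (2 * J + 1), ∫ θ, c i * (θ - θ₀) ^ i ∂ν :=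
          integral_finset_sum _ fun i _ => (hpow_int i ν hνp hν).const_mul (c i)
      _ = ∑ i ∈ Finset.range (2 * J + 1), c i * m i ν := by
          refine Finset.sum_congr rfl fun i _ => ?_
          rw [integral_const_mul, hm i ν]
  have hΔ0 : m 0 g - m 0 g₀ = 0 := by simp [hm]
  -- key identity
  have hkey : ∫ θ, P θ ∂g = ∑ i ∈ Finset.range (2 * J + 1), c i * (m i g - m i g₀) := by
    have h1 := hexp g ‹_› hgΘ
    have h2 := hexp g₀ ‹_› hg₀Θ
    rw [hIP0] at h2
    have h3 : ∑ i ∈ Finset.range (2 * J + 1), c i * (m i g - m i g₀)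
        = (∑ i ∈ Finset.range (2 * J + 1), c i * m i g)
          - ∑ i ∈ Finset.range (2 * J + 1), c i * m i g₀ := by
      rw [← Finset.sum_sub_distrib]
      exact Finset.sum_congr rfl fun i _ => by ring
    rw [h1, h3, ← h2, sub_zero]
  -- bound on the sum
  have hS0 : 0 ≤ S := by
    have h1 : (1 : ℕ) ∈ Finset.Icc 1 (2 * J) := Finset.mem_Icc.mpr ⟨le_refl _, by omega⟩
    exact (abs_nonneg (m 1 g - m 1 g₀)).trans
      (Finset.le_sup' (fun j => |m j g - m j g₀|) h1)
  have hsum_bd : |∑ i ∈ Finset.range (2 * J + 1), c i * (m i g - m i g₀)|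
      ≤ (M + 1) ^ (2 * J) * S := by
    calc |∑ i ∈ Finset.range (2 * J + 1), c i * (m i g - m i g₀)|
        ≤ ∑ i ∈ Finset.range (2 * J + 1), |c i * (m i g - m i g₀)| :=
          Finset.abs_sum_le_sum_abs _ _
      _ ≤ ∑ i ∈ Finset.range (2 * J + 1), |c i| * S := by
          refine Finset.sum_le_sum fun i hi => ?_
          rw [abs_mul]
          refine mul_le_mul_of_nonneg_left ?_ (abs_nonneg _)
          rcases Nat.eq_zero_or_pos i with h0 | hpos
          · rw [h0, hΔ0, abs_zero]; exact hS0
          · have : i ∈ Finset.Icc 1 (2 * J) :=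
              Finset.mem_Icc.mpr ⟨hpos, by have := Finset.mem_range.mp hi; omega⟩
            exact Finset.le_sup' (fun j => |m j g - m j g₀|) this
      _ = (∑ i ∈ Finset.range (2 * J + 1), |c i|) * S := by rw [Finset.sum_mul]
      _ ≤ (M + 1) ^ (2 * J) * S := mul_le_mul_of_nonneg_right hcM hS0
  -- main estimate
  have hfabs : |∫ θ, f θ ∂g| ≤ M ^ n * ∫ θ, P θ ∂g := by
    calc |∫ θ, f θ ∂g| ≤ ∫ θ, |f θ| ∂g := by
          simpa [Real.norm_eq_abs] using norm_integral_le_integral_norm (μ := g) f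
      _ ≤ ∫ θ, M ^ n * P θ ∂g := by
          refine integral_mono_ae hfint.abs (hPint.const_mul _) ?_
          have hae : ∀ᵐ θ ∂g, θ ∈ Θ := by rw [ae_iff]; exact hgΘ
          filter_upwards [hae] with θ hθ
          rw [hf, abs_mul, abs_of_nonneg (hPnn θ), abs_pow]
          exact mul_le_mul_of_nonneg_right
            (pow_le_pow_left₀ (abs_nonneg _) (hMabs θ hθ) n) (hPnn θ)
      _ = M ^ n * ∫ θ, P θ ∂g := integral_const_mul _ _
  have hfinal : ∫ θ, P θ ∂g ≤ (M + 1) ^ (2 * J) * S := by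
    rw [hkey]
    exact (le_abs_self _).trans hsum_bd
  calc |(∫ θ, (θ - θ₀) ^ (k - 2 * J) * ∏ j, (θ - θs j) ^ 2 ∂g) -
        ∫ θ, (θ - θ₀) ^ (k - 2 * J) * ∏ j, (θ - θs j) ^ 2 ∂g₀|
      = |∫ θ, f θ ∂g| := by rw [show (∫ θ, (θ - θ₀) ^ (k - 2 * J) * ∏ j, (θ - θs j) ^ 2 ∂g₀)
          = ∫ θ, f θ ∂g₀ from rfl, hIf0, sub_zero]
    _ ≤ M ^ n * ∫ θ, P θ ∂g := hfabs
    _ ≤ M ^ n * ((M + 1) ^ (2 * J) * S) :=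
        mul_le_mul_of_nonneg_left hfinal (pow_nonneg hM0 n)
    _ = (M + 1) ^ (2 * J) * M ^ (k - 2 * J) * S := by rw [hn]; ring
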